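/- Fix reals α, β with 0 ≤ α < 1 and β > 2, and suppose D(a) is bounded. Then for every M ∈ ℕ the set 𝒢(M) = {w ∈ 𝓛 : k₂(w) ≤ M} has specification. -/

import Mathlib

noncomputable section

namespace IntermediateBeta

/-- The intermediate beta transformation `x ↦ βx + α mod 1`. -/
def F (α β : ℝ) (x : ℝ) : ℝ := Int.fract (β * x + α)

/-- The digit sequence of a point: `Om α β x n` is the index `i` with `F^[n] x ∈ J_i`.
For `y ∈ [0,1)` we have `y ∈ J_i ↔ ⌊β y + α⌋ = i`. -/
def Om (α β : ℝ) (x : ℝ) : ℕ → ℕ := fun n => (⌊β * ((F α β)^[n] x) + α⌋).toNat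

/-- `ℓ = ⌈α + β⌉ - 1`. -/
def ell (α β : ℝ) : ℕ := ⌈α + β⌉₊ - 1

/-- The subshift `Σ`: closure (in the product topology) of the set of digit sequences
of points of `[0,1)`. -/
def Sig (α β : ℝ) : Set (ℕ → ℕ) := closure (Om α β '' Set.Ico (0 : ℝ) 1)

/-- The shift map. -/
def shift (x : ℕ → ℕ) : ℕ → ℕ := fun n => x (n + 1)

/-- Lexicographic order on one-sided sequences. -/
def lexLe (x y : ℕ → ℕ) : Prop := x = y ∨ ∃ k, (∀ i < k, x i = y i) ∧ x k < y k

/-- The language of a subset `S` of the full shift: the finite words occurring as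
initial segments of elements of `S`. -/
def langOf (S : Set (ℕ → ℕ)) (w : List ℕ) : Prop :=
  ∃ x ∈ S, ∀ i : Fin w.length, x i = w.get i

/-- Membership in the language `𝓛` of the subshift `Σ`. -/
def inLang (α β : ℝ) (w : List ℕ) : Prop := langOf (Sig α β) w

/-- The tail segment of `w` of length `k` agrees with the initial segment of `s`
of length `k`. -/
def tailAgrees (s : ℕ → ℕ) (w : List ℕ) (k : ℕ) : Prop :=
  k ≤ w.length ∧ ∀ i < k, w.getD (w.length - k + i) 0 = s i

/-- `kmax s w` is the length of the longest tail segment of `w` agreeing with an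
initial segment of `s` (`k₁(w)` when `s = a`, `k₂(w)` when `s = b`). -/
def kmax (s : ℕ → ℕ) (w : List ℕ) : ℕ := sSup {k | tailAgrees s w k}

/-- `D a b` is the set of lengths `n` such that the initial segment of `b` of
length `n` occurs somewhere in `a`.  Thus `D a b` is the set `𝖣(a)` of the paper
and `D b a` is `𝖣(b)`. -/
def D (a b : ℕ → ℕ) : Set ℕ := {n | ∃ j, ∀ i < n, b i = a (j + i)}

/-- Gluing of the words `w 0, v 0, w 1, v 1, …, v (n-1), w n`. -/
def glue {n : ℕ} (w : Fin (n + 1) → List ℕ) (v : Fin n → List ℕ) : List ℕ :=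
  (List.ofFn fun i : Fin n => w i.castSucc ++ v i).flatten ++ w (Fin.last n)

/-- A collection `G` of words inside the language `lang` has specification: there
is `τ ∈ ℕ` such that any finite list of words of `G` can be glued, with gluing
words from `lang` of length `τ`, into a word of `lang`. -/
def HasSpec (lang G : List ℕ → Prop) : Prop :=
  ∃ τ : ℕ, 1 ≤ τ ∧ ∀ n : ℕ, ∀ w : Fin (n + 1) → List ℕ, (∀ i, G (w i)) →
    ∃ v : Fin n → List ℕ, (∀ i, (v i).length = τ ∧ lang (v i)) ∧ lang (glue w v)

/-- The initial segment of a sequence, as a finite word. -/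
def pre (s : ℕ → ℕ) (n : ℕ) : List ℕ := List.ofFn fun i : Fin n => s i

/-- Lexicographic order for finite words (of equal length). -/
def wordLe (u v : List ℕ) : Prop :=
  u = v ∨ ∃ k, (∀ i < k, u.getD i 0 = v.getD i 0) ∧ u.getD k 0 < v.getD k 0

/-- Concatenation of a finite word with an infinite sequence. -/
def wcat (w : List ℕ) (x : ℕ → ℕ) : ℕ → ℕ := fun n =>
  if h : n < w.length then w.get ⟨n, h⟩ else x (n - w.length)


/-! ### Stage A: the upper kneading sequence -/

section Dev
variable (α β : ℝ)

/-- `gam α β m` is the left limit of `F^[m]` at `1`. -/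
def gam : ℕ → ℝ
  | 0 => 1
  | n + 1 => β * gam n + α - (⌈β * gam n + α⌉ - 1)

/-- The integer digits of the upper kneading sequence. -/
def ib (n : ℕ) : ℤ := ⌈β * gam α β n + α⌉ - 1

/-- The upper kneading sequence (to be identified with `b`). -/
def bb (n : ℕ) : ℕ := (ib α β n).toNat

variable {α β : ℝ}

lemma gam_succ (n : ℕ) : gam α β (n + 1) = β * gam α β n + α - ib α β n := by
  simp [gam, ib]

lemma gam_pos_le (n : ℕ) : 0 < gam α β n ∧ gam α β n ≤ 1 := by
  induction n with
  | zero => norm_num [gam]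
  | succ n _ =>
    constructor
    · have h := Int.ceil_lt_add_one (β * gam α β n + α)
      simp only [gam]; linarith
    · have h := Int.le_ceil (β * gam α β n + α)
      simp only [gam]; linarith

lemma gam_pos (n : ℕ) : 0 < gam α β n := (gam_pos_le n).1
lemma gam_le_one (n : ℕ) : gam α β n ≤ 1 := (gam_pos_le n).2

lemma ib_nonneg (hα0 : 0 ≤ α) (hβ : 0 < β) (n : ℕ) : 0 ≤ ib α β n := by
  have h1 : 0 < β * gam α β n + α := by nlinarith [gam_pos (α := α) (β := β) n]
  have : (1 : ℤ) ≤ ⌈β * gam α β n + α⌉ := by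
    rw [Int.le_ceil_iff]; push_cast; linarith
  simp only [ib]; omega

lemma ib_cast (hα0 : 0 ≤ α) (hβ : 0 < β) (n : ℕ) : ((bb α β n : ℤ)) = ib α β n := by
  simp [bb, Int.toNat_of_nonneg (ib_nonneg hα0 hβ n)]

lemma F_apply (x : ℝ) : F α β x = β * x + α - ⌊β * x + α⌋ := rfl

lemma F_mem_Ico (x : ℝ) : F α β x ∈ Set.Ico (0:ℝ) 1 :=
  ⟨Int.fract_nonneg _, Int.fract_lt_one _⟩

lemma Om_eq_digit (x : ℝ) (n : ℕ) : Om α β x n = (⌊β * ((F α β)^[n] x) + α⌋).toNat := rfl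

lemma Om_shift (x : ℝ) (m n : ℕ) : Om α β ((F α β)^[m] x) n = Om α β x (m + n) := by
  simp [Om, ← Function.iterate_add_apply, Nat.add_comm]

/-- Stability of digits just below `gam m`. -/
lemma exists_stab (hβ : 0 < β) (m : ℕ) : ∃ ε > 0, ∀ u : ℝ, gam α β m - ε < u → u < gam α β m →
    (⌊β * u + α⌋ = ib α β m ∧ F α β u = gam α β (m + 1) + β * (u - gam α β m)) := by
  set t := β * gam α β m + α with ht
  have h1 : (⌈t⌉ : ℝ) - 1 < t := by
    have := Int.ceil_lt_add_one t; linarith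
  refine ⟨(t - (⌈t⌉ - 1)) / β, div_pos (by linarith) hβ, fun u hu1 hu2 => ?_⟩
  have hbu : β * u + α < t := by nlinarith
  have hβε : β * ((t - (↑⌈t⌉ - 1)) / β) = t - (↑⌈t⌉ - 1) := by field_simp
  have hbu2 : (⌈t⌉ : ℝ) - 1 < β * u + α := by nlinarith
  have hfl : ⌊β * u + α⌋ = ib α β m := by
    rw [ib, Int.floor_eq_iff]
    constructor
    · push_cast; linarith
    · push_cast
      have := Int.le_ceil t
      linarith
  refine ⟨hfl, ?_⟩
  rw [F_apply, hfl]
  have : gam α β (m + 1) = t - ib α β m := by rw [gam_succ, ht]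
  rw [this, ht]; push_cast; ring

/-- Iterated stability: points just below `gam m` follow the kneading orbit. -/
lemma exists_iter_at (hβ : 0 < β) (m n : ℕ) : ∃ ε > 0, ∀ u : ℝ,
    gam α β m - ε < u → u < gam α β m →
    (∀ i < n, ⌊β * ((F α β)^[i] u) + α⌋ = ib α β (m + i)) ∧
    (F α β)^[n] u = gam α β (m + n) + β ^ n * (u - gam α β m) := by
  induction n with
  | zero =>
    exact ⟨1, one_pos, fun u _ hu2 => ⟨fun i hi => absurd hi (Nat.not_lt_zero i), by simp⟩⟩
  | succ n ih =>
    obtain ⟨ε₁, hε₁, H₁⟩ := ih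
    obtain ⟨ε₂, hε₂, H₂⟩ := exists_stab (α := α) hβ (m + n)
    refine ⟨min ε₁ (ε₂ / β ^ n), by positivity, fun u hu1 hu2 => ?_⟩
    have hu1' : gam α β m - ε₁ < u := lt_of_le_of_lt (by
      have := min_le_left ε₁ (ε₂ / β ^ n); linarith) hu1
    obtain ⟨hdig, hval⟩ := H₁ u hu1' hu2
    have hlt : (F α β)^[n] u < gam α β (m + n) := by
      rw [hval]
      have : β ^ n * (u - gam α β m) < 0 := by
        have : u - gam α β m < 0 := by linarith
        have hp : (0:ℝ) < β ^ n := by positivity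
        nlinarith
      linarith
    have hgt : gam α β (m + n) - ε₂ < (F α β)^[n] u := by
      rw [hval]
      have h3 : u > gam α β m - ε₂ / β ^ n := lt_of_le_of_lt (by
        have := min_le_right ε₁ (ε₂ / β ^ n); linarith) hu1
      have hp : (0:ℝ) < β ^ n := by positivity
      have : β ^ n * (u - gam α β m) > β ^ n * (- (ε₂ / β ^ n)) := by
        apply mul_lt_mul_of_pos_left _ hp; linarith
      have h4 : β ^ n * (- (ε₂ / β ^ n)) = -ε₂ := by field_simp
      linarith
    obtain ⟨hd2, hv2⟩ := H₂ ((F α β)^[n] u) hgt hlt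
    constructor
    · intro i hi
      rcases Nat.lt_succ_iff_lt_or_eq.mp hi with h | h
      · exact hdig i h
      · subst h; exact hd2
    · rw [Function.iterate_succ_apply', hv2, hval]
      have : m + (n + 1) = (m + n) + 1 := by ring
      rw [this]; ring


/-! ### Stage B: identification of `b` with `bb` -/

lemma iterate_nonneg {x : ℝ} (hx0 : 0 ≤ x) (i : ℕ) : 0 ≤ (F α β)^[i] x := by
  cases i with
  | zero => exact hx0
  | succ n => rw [Function.iterate_succ_apply']; exact (F_mem_Ico _).1

lemma iterate_mem_Ico {x : ℝ} (hx : x ∈ Set.Ico (0:ℝ) 1) (i : ℕ) :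
    (F α β)^[i] x ∈ Set.Ico (0:ℝ) 1 := by
  cases i with
  | zero => exact hx
  | succ n => rw [Function.iterate_succ_apply']; exact F_mem_Ico _

lemma dig_nonneg (hα0 : 0 ≤ α) (hβ : 0 < β) {u : ℝ} (hu : 0 ≤ u) :
    0 ≤ ⌊β * u + α⌋ := Int.floor_nonneg.mpr (by nlinarith)

lemma bb_prefix_point (hα0 : 0 ≤ α) (hβ : 0 < β) (n : ℕ) :
    ∃ x ∈ Set.Ico (0:ℝ) 1, ∀ i < n, Om α β x i = bb α β i := by
  obtain ⟨ε, hε, H⟩ := exists_iter_at (α := α) hβ 0 n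
  refine ⟨1 - min ε 1 / 2, ⟨by have := min_le_right ε 1; linarith, by
    have : 0 < min ε 1 := lt_min hε one_pos; linarith⟩, fun i hi => ?_⟩
  have h1 : gam α β 0 - ε < 1 - min ε 1 / 2 := by
    have h2 : 0 < min ε 1 := lt_min hε one_pos
    have := min_le_left ε 1
    simp only [gam]; linarith
  have h2 : (1:ℝ) - min ε 1 / 2 < gam α β 0 := by
    have : 0 < min ε 1 := lt_min hε one_pos
    simp only [gam]; linarith
  obtain ⟨hdig, -⟩ := H _ h1 h2
  rw [Om_eq_digit, hdig i hi, bb]; simp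

lemma bb_mem_Sig (hα0 : 0 ≤ α) (hβ : 0 < β) : bb α β ∈ Sig α β := by
  have hpt : ∀ n : ℕ, ∃ x ∈ Set.Ico (0:ℝ) 1, ∀ i < n, Om α β x i = bb α β i :=
    bb_prefix_point hα0 hβ
  choose x hx hdig using hpt
  have htend : Filter.Tendsto (fun n => Om α β (x n)) Filter.atTop (nhds (bb α β)) := by
    rw [tendsto_pi_nhds]
    intro i
    apply Filter.Tendsto.congr' _ tendsto_const_nhds
    filter_upwards [Filter.eventually_ge_atTop (i + 1)] with n hn
    exact (hdig n i (by omega)).symm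
  exact mem_closure_of_tendsto htend
    (Filter.Eventually.of_forall fun n => Set.mem_image_of_mem _ (hx n))

lemma lexLe_antisymm {x y : ℕ → ℕ} (h1 : lexLe x y) (h2 : lexLe y x) : x = y := by
  rcases h1 with h1 | ⟨k, hk, hk2⟩
  · exact h1
  rcases h2 with h2 | ⟨k', hk', hk2'⟩
  · exact h2.symm
  exfalso
  rcases lt_trichotomy k k' with h | h | h
  · have := hk' k h; omega
  · subst h; omega
  · have := hk k' h; omega

lemma orbit_lt_gam (hα0 : 0 ≤ α) (hβ : 0 < β) {x : ℝ} (hx0 : 0 ≤ x) (hx1 : x < 1)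
    (i : ℕ) (hdig : ∀ j < i, Om α β x j = bb α β j) : (F α β)^[i] x < gam α β i := by
  induction i with
  | zero => simpa [gam] using hx1
  | succ i ih =>
    have hi : (F α β)^[i] x < gam α β i := ih (fun j hj => hdig j (by omega))
    have hfl : ⌊β * ((F α β)^[i] x) + α⌋ = ib α β i := by
      have h1 := hdig i (by omega)
      rw [Om_eq_digit] at h1
      have h2 : 0 ≤ ⌊β * ((F α β)^[i] x) + α⌋ := dig_nonneg hα0 hβ (iterate_nonneg hx0 i)
      have h3 := ib_nonneg (α := α) hα0 hβ i
      rw [bb] at h1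
      omega
    rw [Function.iterate_succ_apply', F_apply, hfl, gam_succ]
    have : β * (F α β)^[i] x < β * gam α β i := by
      apply mul_lt_mul_of_pos_left hi hβ
    linarith

lemma om_lexLe_bb (hα0 : 0 ≤ α) (hβ : 0 < β) {x : ℝ} (hx : x ∈ Set.Ico (0:ℝ) 1) :
    lexLe (Om α β x) (bb α β) := by
  by_cases h : Om α β x = bb α β
  · exact Or.inl h
  have hex : ∃ t, Om α β x t ≠ bb α β t := Function.ne_iff.mp h
  right
  refine ⟨Nat.find hex, fun i hi => by
    have := Nat.find_min hex hi; simpa using this, ?_⟩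
  set t := Nat.find hex with htdef
  have hne : Om α β x t ≠ bb α β t := Nat.find_spec hex
  have hlt : (F α β)^[t] x < gam α β t :=
    orbit_lt_gam hα0 hβ hx.1 hx.2 t (fun j hj => by
      have := Nat.find_min hex hj; simpa using this)
  have hfl : ⌊β * ((F α β)^[t] x) + α⌋ ≤ ib α β t := by
    have h1 : β * ((F α β)^[t] x) + α < β * gam α β t + α := by
      have := mul_lt_mul_of_pos_left hlt hβ; linarith
    have h2 : ⌊β * ((F α β)^[t] x) + α⌋ < ⌈β * gam α β t + α⌉ := by
      rw [Int.lt_ceil]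
      calc (⌊β * ((F α β)^[t] x) + α⌋ : ℝ) ≤ _ := Int.floor_le _
        _ < _ := h1
    rw [ib]; omega
  have : Om α β x t ≤ bb α β t := by
    rw [Om_eq_digit, bb]
    exact Int.toNat_le_toNat hfl
  omega

lemma sig_approx {y : ℕ → ℕ} (hy : y ∈ Sig α β) (t : ℕ) :
    ∃ x ∈ Set.Ico (0:ℝ) 1, ∀ i < t, Om α β x i = y i := by
  have hU : IsOpen (⋂ i ∈ Finset.range t, {z : ℕ → ℕ | z i = y i}) := by
    apply isOpen_biInter_finset
    intro i _
    show IsOpen ((fun z : ℕ → ℕ => z i) ⁻¹' {y i})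
    exact IsOpen.preimage (continuous_apply i) (isOpen_discrete _)
  have hyU : y ∈ ⋂ i ∈ Finset.range t, {z : ℕ → ℕ | z i = y i} := by
    simp
  obtain ⟨z, hz1, hz2⟩ := _root_.mem_closure_iff.mp hy _ hU hyU
  obtain ⟨x, hx, rfl⟩ := hz2
  refine ⟨x, hx, fun i hi => ?_⟩
  simp only [Set.mem_iInter, Set.mem_setOf_eq, Finset.mem_range] at hz1
  exact hz1 i hi

lemma sig_lexLe_bb (hα0 : 0 ≤ α) (hβ : 0 < β) {y : ℕ → ℕ} (hy : y ∈ Sig α β) :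
    lexLe y (bb α β) := by
  by_cases h : y = bb α β
  · exact Or.inl h
  have hex : ∃ t, y t ≠ bb α β t := Function.ne_iff.mp h
  set t := Nat.find hex with htdef
  obtain ⟨x, hx, hxy⟩ := sig_approx hy (t + 1)
  have hlex := om_lexLe_bb hα0 hβ hx
  rcases hlex with heq | ⟨k, hk, hk2⟩
  · exfalso
    exact Nat.find_spec hex (by rw [← hxy t (by omega), heq])
  · right
    have hkt : k = t := by
      rcases lt_trichotomy k t with h1 | h1 | h1
      · exfalso
        have h2 := Nat.find_min hex h1
        simp only [ne_eq, not_not] at h2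
        rw [hxy k (by omega)] at hk2
        omega
      · exact h1
      · exfalso
        have := hk t h1
        rw [hxy t (by omega)] at this
        exact Nat.find_spec hex this
    refine ⟨t, fun i hi => by
      have := Nat.find_min hex hi; simpa using this, ?_⟩
    rw [← hxy t (by omega), ← hkt]
    exact hk2

lemma b_eq_bb (hα0 : 0 ≤ α) (hβ : 0 < β) {b : ℕ → ℕ} (hb : b ∈ Sig α β)
    (hbsup : ∀ y ∈ Sig α β, lexLe y b) : b = bb α β :=
  lexLe_antisymm (sig_lexLe_bb hα0 hβ hb) (hbsup _ (bb_mem_Sig hα0 hβ))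


/-! ### Stage C: cylinder structure -/

/-- The cylinder set of a word. -/
def Cyl (α β : ℝ) (w : List ℕ) : Set ℝ :=
  {x | x ∈ Set.Ico (0:ℝ) 1 ∧ ∀ i < w.length, Om α β x i = w.getD i 0}

lemma mem_Cyl_cons {d : ℕ} {w : List ℕ} {x : ℝ} :
    x ∈ Cyl α β (d :: w) ↔ x ∈ Set.Ico (0:ℝ) 1 ∧ Om α β x 0 = d ∧ F α β x ∈ Cyl α β w := by
  constructor
  · rintro ⟨hx, hdig⟩
    refine ⟨hx, by simpa using hdig 0 (by simp), F_mem_Ico x, fun i hi => ?_⟩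
    have h1 := hdig (i + 1) (by simp only [List.length_cons]; omega)
    rw [List.getD_cons_succ] at h1
    rw [← h1]
    have h2 := Om_shift (α := α) (β := β) x 1 i
    simpa [Nat.add_comm] using h2
  · rintro ⟨hx, h0, hF, hdig⟩
    refine ⟨hx, fun i hi => ?_⟩
    cases i with
    | zero => simpa using h0
    | succ j =>
      rw [List.getD_cons_succ, ← hdig j (by simp only [List.length_cons] at hi; omega)]
      have h2 := Om_shift (α := α) (β := β) x 1 j
      simpa [Nat.add_comm] using h2.symm

lemma F_zero (hα0 : 0 ≤ α) (hα1 : α < 1) : F α β 0 = α := by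
  rw [F_apply]
  have : ⌊β * 0 + α⌋ = 0 := by
    rw [Int.floor_eq_zero_iff]
    constructor <;> simp <;> linarith
  rw [this]; push_cast; ring

lemma Om_zero_zero (hα0 : 0 ≤ α) (hα1 : α < 1) : Om α β 0 0 = 0 := by
  rw [Om_eq_digit]
  simp only [Function.iterate_zero, id_eq]
  have : ⌊β * 0 + α⌋ = 0 := by
    rw [Int.floor_eq_zero_iff]
    constructor <;> simp <;> linarith
  rw [this]; rfl

/-- Main structure lemma for cylinders. -/
lemma cyl_struct (hα0 : 0 ≤ α) (hα1 : α < 1) (hβ : 1 < β) (w : List ℕ)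
    (hne : (Cyl α β w).Nonempty) :
    ∃ p q : ℝ, ∃ m m' : ℕ,
      Cyl α β w = Set.Ico p q ∧ 0 ≤ p ∧ p < q ∧ q ≤ 1 ∧
      (∀ x ∈ Set.Ico p q, (F α β)^[w.length] x =
          (F α β)^[w.length] p + β ^ w.length * (x - p)) ∧
      m' ≤ w.length ∧ (F α β)^[w.length] p = (F α β)^[m'] 0 ∧
      (∀ i < m', w.getD (w.length - m' + i) 0 = Om α β 0 i) ∧
      m ≤ w.length ∧ (F α β)^[w.length] p + β ^ w.length * (q - p) = gam α β m ∧
      (∀ i < m, w.getD (w.length - m + i) 0 = bb α β i) := by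
  have hβ0 : (0:ℝ) < β := by linarith
  induction w with
  | nil =>
    refine ⟨0, 1, 0, 0, ?_, le_refl _, one_pos, le_refl _, ?_, le_refl _, rfl, ?_, le_refl _, ?_, ?_⟩
    · ext x; simp [Cyl]
    · intro x _; simp
    · intro i hi; omega
    · simp [gam]
    · intro i hi; omega
  | cons d w ih =>
    obtain ⟨x₀, hx₀⟩ := hne
    have hwne : (Cyl α β w).Nonempty := ⟨F α β x₀, (mem_Cyl_cons.mp hx₀).2.2⟩
    obtain ⟨p, q, m, m', hset, hp0, hpq, hq1, haff, hm'le, hm'val, hm'dig, hmle, hmval, hmdig⟩ :=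
      ih hwne
    set n := w.length with hn
    set Pd : ℝ := (p + d - α) / β with hPd
    set Qd : ℝ := (q + d - α) / β with hQd
    set p₂ : ℝ := max 0 Pd with hp₂
    set q₂ : ℝ := min 1 Qd with hq₂
    -- branch facts on the candidate interval
    have hQdβ : β * Qd = q + (d : ℝ) - α := by
      rw [hQd]; field_simp
    have hPdβ : β * Pd = p + (d : ℝ) - α := by
      rw [hPd]; field_simp
    have hbranch : ∀ x ∈ Set.Ico p₂ q₂,
        ⌊β * x + α⌋ = (d : ℤ) ∧ F α β x = β * x + α - d ∧ F α β x ∈ Set.Ico p q ∧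
          x ∈ Set.Ico (0:ℝ) 1 := by
      intro x hx
      have hx0 : (0:ℝ) ≤ x := le_trans (le_max_left 0 Pd) hx.1
      have hPdx : Pd ≤ x := le_trans (le_max_right 0 Pd) hx.1
      have hx1 : x < 1 := lt_of_lt_of_le hx.2 (min_le_left 1 Qd)
      have hxQd : x < Qd := lt_of_lt_of_le hx.2 (min_le_right 1 Qd)
      have hβx1 : p + (d:ℝ) - α ≤ β * x := by
        calc p + (d:ℝ) - α = β * Pd := hPdβ.symm
        _ ≤ β * x := by apply mul_le_mul_of_nonneg_left hPdx (le_of_lt hβ0)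
      have hβx2 : β * x < q + (d:ℝ) - α := by
        calc β * x < β * Qd := by apply mul_lt_mul_of_pos_left hxQd hβ0
        _ = _ := hQdβ
      have hfl : ⌊β * x + α⌋ = (d : ℤ) := by
        rw [Int.floor_eq_iff]
        constructor
        · push_cast; linarith
        · push_cast; linarith
      have hFx : F α β x = β * x + α - d := by rw [F_apply, hfl]; push_cast; ring
      exact ⟨hfl, hFx, ⟨by rw [hFx]; linarith, by rw [hFx]; linarith⟩, hx0, hx1⟩
    have hchar : ∀ x : ℝ, x ∈ Cyl α β (d :: w) ↔ x ∈ Set.Ico p₂ q₂ := by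
      intro x
      rw [mem_Cyl_cons, hset]
      constructor
      · rintro ⟨⟨hx0, hx1⟩, hd, hFp, hFq⟩
        have hfl : ⌊β * x + α⌋ = (d : ℤ) := by
          have h1 : 0 ≤ ⌊β * x + α⌋ := dig_nonneg hα0 hβ0 hx0
          rw [Om_eq_digit] at hd
          simp only [Function.iterate_zero, id_eq] at hd
          omega
        have hFx : F α β x = β * x + α - d := by rw [F_apply, hfl]; push_cast; ring
        rw [hFx] at hFp hFq
        constructor
        · apply max_le hx0
          rw [hPd, div_le_iff₀ hβ0]; linarith
        · apply lt_min hx1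
          rw [hQd, lt_div_iff₀ hβ0]; linarith
      · intro hx
        obtain ⟨hfl, hFx, hFmem, hx01⟩ := hbranch x hx
        refine ⟨hx01, ?_, hFmem⟩
        rw [Om_eq_digit]
        simp only [Function.iterate_zero, id_eq]
        rw [hfl]; rfl
    have hceq : Cyl α β (d :: w) = Set.Ico p₂ q₂ := Set.ext hchar
    have hne2 : p₂ < q₂ := by
      have := (hchar x₀).mp hx₀
      exact lt_of_le_of_lt this.1 this.2
    have hp₂mem : p₂ ∈ Set.Ico p₂ q₂ := ⟨le_refl _, hne2⟩
    have hp₂0 : 0 ≤ p₂ := le_max_left 0 Pd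
    have hq₂1 : q₂ ≤ 1 := min_le_left 1 Qd
    -- affine structure
    have haff2 : ∀ x ∈ Set.Ico p₂ q₂, (F α β)^[n + 1] x =
        (F α β)^[n + 1] p₂ + β ^ (n + 1) * (x - p₂) := by
      intro x hx
      obtain ⟨-, hFx, hFmem, -⟩ := hbranch x hx
      obtain ⟨-, hFp₂, hFmem₂, -⟩ := hbranch p₂ hp₂mem
      rw [Function.iterate_succ_apply, Function.iterate_succ_apply,
        haff _ hFmem, haff _ hFmem₂, hFx, hFp₂, pow_succ]
      ring
    -- lower endpoint data
    have hlow : ∃ m'' ≤ n + 1, (F α β)^[n + 1] p₂ = (F α β)^[m''] 0 ∧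
        ∀ i < m'', (d :: w).getD (n + 1 - m'' + i) 0 = Om α β 0 i := by
      by_cases hc : 0 ≤ Pd
      · have hp2eq : p₂ = Pd := max_eq_right hc
        have hFp₂ : F α β p₂ = p := by
          obtain ⟨-, hFx, -, -⟩ := hbranch p₂ hp₂mem
          rw [hFx, hp2eq]
          have : β * Pd = p + (d:ℝ) - α := hPdβ
          linarith
        refine ⟨m', by omega, ?_, ?_⟩
        · rw [Function.iterate_succ_apply, hFp₂, hm'val]
        · intro i hi
          have hidx : n + 1 - m' + i = (n - m' + i) + 1 := by omega
          rw [hidx, List.getD_cons_succ]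
          exact hm'dig i hi
      · push_neg at hc
        have hp2eq : p₂ = 0 := max_eq_left (le_of_lt hc)
        have hd0 : d = 0 := by
          have h1 : (d:ℝ) < α - p := by
            have : β * Pd < β * 0 := by apply mul_lt_mul_of_pos_left hc hβ0
            rw [hPdβ] at this; linarith
          have h2 : (d:ℝ) < 1 := by linarith
          exact_mod_cast Nat.lt_one_iff.mp (by exact_mod_cast h2)
        have hαmem : α ∈ Set.Ico p q := by
          constructor
          · have : β * Pd < 0 := by
              have := mul_lt_mul_of_pos_left hc hβ0; linarith
            rw [hPdβ, hd0] at this; push_cast at this; linarith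
          · have h0q : (0:ℝ) < Qd := lt_of_le_of_lt hp₂0 (lt_of_lt_of_le hne2 (min_le_right 1 Qd))
            have : 0 < β * Qd := by positivity
            rw [hQdβ, hd0] at this; push_cast at this; linarith
        have hαcyl : α ∈ Cyl α β w := by rw [hset]; exact hαmem
        refine ⟨n + 1, le_refl _, by rw [hp2eq], ?_⟩
        intro i hi
        have hidx : n + 1 - (n + 1) + i = i := by omega
        rw [hidx]
        cases i with
        | zero =>
          rw [hd0, List.getD_cons_zero, Om_zero_zero hα0 hα1]
        | succ j =>
          rw [List.getD_cons_succ]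
          have hj : j < n := by omega
          have h1 := hαcyl.2 j hj
          have h2 : Om α β 0 (j + 1) = Om α β α j := by
            have h3 := Om_shift (α := α) (β := β) 0 1 j
            rw [Nat.add_comm] at h3
            rw [← h3]
            simp [F_zero hα0 hα1]
          rw [h2, ← h1]
    -- upper endpoint data
    have hup : ∃ m₂ ≤ n + 1, (F α β)^[n + 1] p₂ + β ^ (n + 1) * (q₂ - p₂) = gam α β m₂ ∧
        ∀ i < m₂, (d :: w).getD (n + 1 - m₂ + i) 0 = bb α β i := by
      by_cases hc : Qd ≤ 1
      · have hq2eq : q₂ = Qd := min_eq_right hc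
        obtain ⟨-, hFp₂, hFmem₂, -⟩ := hbranch p₂ hp₂mem
        have e1 : (F α β)^[n + 1] p₂ = (F α β)^[n] p + β ^ n * (F α β p₂ - p) := by
          rw [Function.iterate_succ_apply]; exact haff _ hFmem₂
        refine ⟨m, by omega, ?_, ?_⟩
        · rw [e1, hFp₂, ← hmval, hq2eq]
          linear_combination (β ^ n) * hQdβ
        · intro i hi
          have hidx : n + 1 - m + i = (n - m + i) + 1 := by omega
          rw [hidx, List.getD_cons_succ]
          exact hmdig i hi
      · push_neg at hc
        have hq2eq : q₂ = 1 := min_eq_left (le_of_lt hc)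
        obtain ⟨ε, hε, H⟩ := exists_iter_at (α := α) hβ0 0 (n + 1)
        set u : ℝ := max p₂ (1 - ε) with hu
        have hu1 : u < 1 := by
          apply max_lt
          · rw [← hq2eq]; exact hne2
          · linarith
        set v : ℝ := (u + 1) / 2 with hv
        have huv : u < v := by rw [hv]; linarith
        have hv1 : v < 1 := by rw [hv]; linarith
        have hvmem : v ∈ Set.Ico p₂ q₂ := by
          constructor
          · exact le_of_lt (lt_of_le_of_lt (le_max_left p₂ (1 - ε)) huv)
          · rw [hq2eq]; exact hv1
        have hvε : gam α β 0 - ε < v := by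
          have : 1 - ε ≤ u := le_max_right _ _
          simp only [gam]; linarith
        have hvg : v < gam α β 0 := by simp only [gam]; exact hv1
        obtain ⟨hdig, hval⟩ := H v hvε hvg
        have haffv := haff2 v hvmem
        refine ⟨n + 1, le_refl _, ?_, ?_⟩
        · have hval' : (F α β)^[n + 1] v = gam α β (n + 1) + β ^ (n + 1) * (v - 1) := by
            rw [hval]; norm_num [gam]
          rw [hq2eq]
          linear_combination hval' - haffv
        · intro i hi
          have hidx : n + 1 - (n + 1) + i = i := by omega
          rw [hidx]
          have hvcyl : v ∈ Cyl α β (d :: w) := (hchar v).mpr hvmem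
          have h1 := hvcyl.2 i (by simp only [List.length_cons]; omega)
          rw [← h1, Om_eq_digit]
          have h2 := hdig i hi
          rw [Nat.zero_add] at h2
          rw [h2, bb]
    obtain ⟨m'', hm''le, hm''val, hm''dig⟩ := hlow
    obtain ⟨m₂, hm₂le, hm₂val, hm₂dig⟩ := hup
    simp only [List.length_cons]
    exact ⟨p₂, q₂, m₂, m'', hceq, hp₂0, hne2, hq₂1, haff2, by omega, hm''val, hm''dig,
      by omega, hm₂val, hm₂dig⟩

/-! ### Stage D: the key lemma -/

lemma getD_ofFn (f : ℕ → ℕ) (R i : ℕ) (hi : i < R) :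
    (List.ofFn (fun j : Fin R => f j)).getD i 0 = f i := by
  rw [List.getD_eq_getElem _ _ (by simpa using hi)]
  simp

lemma Cyl_append_subset (w v : List ℕ) : Cyl α β (w ++ v) ⊆ Cyl α β w := by
  rintro x ⟨hx, hdig⟩
  refine ⟨hx, fun i hi => ?_⟩
  rw [hdig i (by simp only [List.length_append]; omega), List.getD_append _ _ _ _ hi]

lemma le_kmax_of_tailAgrees {s : ℕ → ℕ} {w : List ℕ} {k : ℕ} (h : tailAgrees s w k) :
    k ≤ kmax s w :=
  le_csSup ⟨w.length, fun _ hj => hj.1⟩ h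

lemma image_affine {p q C A : ℝ} (hA : 0 < A) (g : ℝ → ℝ)
    (hg : ∀ x ∈ Set.Ico p q, g x = C + A * (x - p)) (hpq : p < q) :
    g '' Set.Ico p q = Set.Ico C (C + A * (q - p)) := by
  ext y
  constructor
  · rintro ⟨x, hx, rfl⟩
    rw [hg x hx]
    constructor
    · nlinarith [hx.1]
    · have := hx.2; nlinarith
  · rintro ⟨hy1, hy2⟩
    have hx1 : p ≤ p + (y - C) / A := by
      have : 0 ≤ (y - C) / A := div_nonneg (by linarith) (le_of_lt hA)
      linarith
    have hx2 : p + (y - C) / A < q := by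
      have : (y - C) / A < q - p := by
        rw [div_lt_iff₀ hA]; nlinarith
      linarith
    refine ⟨p + (y - C) / A, ⟨hx1, hx2⟩, ?_⟩
    have h3 : p + (y - C) / A - p = (y - C) / A := by ring
    rw [hg _ ⟨hx1, hx2⟩, h3, mul_comm, div_mul_cancel₀ _ (ne_of_gt hA)]
    ring

/-- The key lemma: cylinders of words in `𝒢(M)` have followers of length at least `δ`. -/
lemma follower_large (hα0 : 0 ≤ α) (hα1 : α < 1) (hβ : 1 < β) {N : ℕ}
    (hDb : ∀ k ∈ D (Om α β 0) (bb α β), k ≤ N) (M : ℕ) :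
    ∃ δ > 0, ∀ w : List ℕ, (Cyl α β w).Nonempty → kmax (bb α β) w ≤ M →
      ∃ c e : ℝ, δ ≤ e - c ∧ Set.Ico c e ⊆ Set.Ico 0 1 ∧
        (F α β)^[w.length] '' Cyl α β w = Set.Ico c e := by
  classical
  have hβ0 : (0:ℝ) < β := by linarith
  set R := N + 1 with hR
  set K := M + N + 1 with hK
  set S : Finset ℝ := ((Finset.range (K+1) ×ˢ Finset.range (K+1)).image
      (fun pr => gam α β pr.1 - (F α β)^[pr.2] 0)).filter (fun x => 0 < x) with hS
  have hSne : (insert (1:ℝ) S).Nonempty := ⟨1, Finset.mem_insert_self _ _⟩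
  set δ₂ : ℝ := (insert (1:ℝ) S).min' hSne with hδ₂
  have hδ₂pos : 0 < δ₂ := by
    have hmm := (insert (1:ℝ) S).min'_mem hSne
    rcases Finset.mem_insert.mp hmm with h | h
    · rw [hδ₂, h]; exact one_pos
    · exact (Finset.mem_filter.mp h).2
  have hδ₂le : ∀ s s' : ℕ, s ≤ K → s' ≤ K → 0 < gam α β s - (F α β)^[s'] 0 →
      δ₂ ≤ gam α β s - (F α β)^[s'] 0 := by
    intro s s' hs hs' hpos
    have hmem : gam α β s - (F α β)^[s'] 0 ∈ S := by
      rw [hS, Finset.mem_filter]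
      refine ⟨Finset.mem_image.mpr ⟨(s, s'), ?_, rfl⟩, by simpa using hpos⟩
      rw [Finset.mem_product]
      constructor <;> · rw [Finset.mem_range]; omega
    exact (insert (1:ℝ) S).min'_le _ (Finset.mem_insert_of_mem hmem)
  refine ⟨δ₂ / β ^ R, by positivity, fun w hne hkm => ?_⟩
  obtain ⟨p, q, m, m', hset, hp0, hpq, hq1, haff, hm'le, hm'val, hm'dig, hmle, hmval, hmdig⟩ :=
    cyl_struct hα0 hα1 hβ w hne
  set n := w.length with hn
  have hmM : m ≤ M := le_trans (le_kmax_of_tailAgrees ⟨hmle, hmdig⟩) hkm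
  obtain ⟨ε, hε, H⟩ := exists_iter_at (α := α) hβ0 m R
  set c : ℝ := (F α β)^[n] p with hc
  have hqp : 0 < q - p := by linarith
  have hgm : c + β ^ n * (q - p) = gam α β m := hmval
  have hcg : c < gam α β m := by
    rw [← hgm]
    have : 0 < β ^ n * (q - p) := by positivity
    linarith
  set y : ℝ := (max c (gam α β m - ε) + gam α β m) / 2 with hy
  have hmax : max c (gam α β m - ε) < gam α β m := max_lt hcg (by linarith)
  have hy1 : max c (gam α β m - ε) < y := by rw [hy]; linarith
  have hy2 : y < gam α β m := by rw [hy]; linarith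
  have hyc : c ≤ y := le_of_lt (lt_of_le_of_lt (le_max_left _ _) hy1)
  have hyε : gam α β m - ε < y := lt_of_le_of_lt (le_max_right _ _) hy1
  have himg : (F α β)^[n] '' Set.Ico p q = Set.Ico c (c + β ^ n * (q - p)) :=
    image_affine (by positivity) _ haff hpq
  have hymem : y ∈ (F α β)^[n] '' Set.Ico p q := by
    rw [himg]; exact ⟨hyc, by rw [hgm]; exact hy2⟩
  obtain ⟨x, hxpq, hxy⟩ := hymem
  have hxcyl : x ∈ Cyl α β w := by rw [hset]; exact hxpq
  obtain ⟨hydig, -⟩ := H y hyε hy2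
  set v : List ℕ := List.ofFn (fun j : Fin R => bb α β (m + j)) with hv
  have hvlen : v.length = R := by rw [hv]; simp [hR]
  have hvD : ∀ i < R, v.getD i 0 = bb α β (m + i) := by
    intro i hi
    rw [hv, getD_ofFn (fun j => bb α β (m + j)) R i hi]
  have hxcyl2 : x ∈ Cyl α β (w ++ v) := by
    refine ⟨hxcyl.1, fun i hi => ?_⟩
    rcases lt_or_ge i n with h | h
    · rw [List.getD_append _ _ _ _ h]
      exact hxcyl.2 i h
    · rw [List.getD_append_right _ _ _ _ h]
      have hiR : i - n < R := by
        rw [List.length_append, hvlen] at hi; omega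
      rw [hvD _ hiR]
      have h1 : Om α β x i = Om α β ((F α β)^[n] x) (i - n) := by
        rw [Om_shift]; congr 1; omega
      rw [h1, hxy, Om_eq_digit, hydig _ hiR, bb]
  obtain ⟨p', q', mt, ms, hset', hp0', hpq', hq1', haff', hmsle, hmsval, hmsdig,
    hmtle, hmtval, hmtdig⟩ := cyl_struct hα0 hα1 hβ (w ++ v) ⟨x, hxcyl2⟩
  have hlen' : (w ++ v).length = n + R := by rw [List.length_append, hvlen]
  rw [hlen'] at hmsle hmsval hmtle hmtval
  simp only [hlen'] at hmsdig hmtdig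
  have hsub : Set.Ico p' q' ⊆ Set.Ico p q := by
    rw [← hset, ← hset']; exact Cyl_append_subset w v
  obtain ⟨hpp', hq'q⟩ := (Set.Ico_subset_Ico_iff hpq').mp hsub
  -- the (m+R)-tail of (w ++ v) is the prefix of bb
  have hbtail : ∀ i < m + R, (w ++ v).getD (n + R - (m + R) + i) 0 = bb α β i := by
    intro i hi
    rcases lt_or_ge i m with h | h
    · have hidx : n + R - (m + R) + i = n - m + i := by omega
      rw [hidx, List.getD_append _ _ _ _ (by omega)]
      exact hmdig i h
    · have hidx : n + R - (m + R) + i = n + (i - m) := by omega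
      rw [hidx, List.getD_append_right _ _ _ _ (by omega)]
      have : n + (i - m) - n = i - m := by omega
      rw [this, hvD _ (by omega)]
      congr 1; omega
  -- bound on mt
  have hmtM : mt ≤ M + R := by
    rcases le_or_gt mt (m + R) with h | h
    · omega
    · have h2 : tailAgrees (bb α β) w (mt - R) := by
        refine ⟨by omega, fun i hi => ?_⟩
        have h3 := hmtdig i (by omega)
        have hidx : n + R - mt + i = n - (mt - R) + i := by omega
        rw [hidx] at h3
        rw [← List.getD_append w v 0 _ (by omega)]
        exact h3
      have := le_trans (le_kmax_of_tailAgrees h2) hkm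
      omega
  -- bound on ms
  have hmsK : ms < m + R := by
    by_contra hcon
    push_neg at hcon
    have hDmem : (m + R) ∈ D (Om α β 0) (bb α β) := by
      refine ⟨ms - (m + R), fun i hi => ?_⟩
      have h3 := hmsdig (ms - (m + R) + i) (by omega)
      have hidx : n + R - ms + (ms - (m + R) + i) = n + R - (m + R) + i := by omega
      rw [hidx] at h3
      rw [← h3]
      exact (hbtail i hi).symm
    have := hDb _ hDmem
    omega
  have hval' : gam α β mt - (F α β)^[ms] 0 = β ^ (n + R) * (q' - p') := by
    rw [← hmtval, hmsval]; ring
  have hpos' : 0 < gam α β mt - (F α β)^[ms] 0 := by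
    rw [hval']
    have : 0 < q' - p' := by linarith
    positivity
  have hδ₂' : δ₂ ≤ gam α β mt - (F α β)^[ms] 0 := hδ₂le mt ms (by omega) (by omega) hpos'
  have hfinal : δ₂ / β ^ R ≤ β ^ n * (q - p) := by
    rw [div_le_iff₀ (by positivity)]
    calc δ₂ ≤ β ^ (n + R) * (q' - p') := by rw [← hval']; exact hδ₂'
      _ ≤ β ^ (n + R) * (q - p) := by
          apply mul_le_mul_of_nonneg_left _ (by positivity)
          linarith
      _ = β ^ n * (q - p) * β ^ R := by rw [pow_add]; ring
  have hc0 : 0 ≤ c := by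
    rw [hc]
    exact (iterate_mem_Ico ⟨hp0, by linarith⟩ n).1
  have he1 : c + β ^ n * (q - p) ≤ 1 := by rw [hgm]; exact gam_le_one m
  refine ⟨c, c + β ^ n * (q - p), by linarith, Set.Ico_subset_Ico hc0 he1, ?_⟩
  rw [hset]
  exact himg



/-! ### Stage E: expansion to full measure -/

/-- `FullReach I t`: inside `I` there is an interval with constant digits for `t` steps
mapping onto `[0,1)` under `F^[t]`. -/
def FullReach (α β : ℝ) (I : Set ℝ) (t : ℕ) : Prop :=
  ∃ u v : ℝ, u < v ∧ Set.Ico u v ⊆ I ∧ Set.Ico u v ⊆ Set.Ico 0 1 ∧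
    (F α β)^[t] '' Set.Ico u v = Set.Ico 0 1 ∧
    ∀ s < t, ∃ ds : ℕ, ∀ x ∈ Set.Ico u v, Om α β x s = ds

lemma Ico_eq_endpoints {a b c d : ℝ} (h : Set.Ico a b = Set.Ico c d) (hab : a < b) :
    a = c ∧ b = d := (Set.Ico_eq_Ico_iff (Or.inl hab)).mp h

/-- The branch `J₁ = [(1-α)/β, (2-α)/β)` is a full branch. -/
lemma full_branch (hα0 : 0 ≤ α) (hα1 : α < 1) (hβ : 2 < β) :
    ((1 - α)/β < (2 - α)/β) ∧ Set.Ico ((1 - α)/β) ((2 - α)/β) ⊆ Set.Ico (0:ℝ) 1 ∧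
    (∀ x ∈ Set.Ico ((1 - α)/β) ((2 - α)/β), ⌊β * x + α⌋ = 1 ∧ Om α β x 0 = 1) ∧
    (F α β) '' Set.Ico ((1 - α)/β) ((2 - α)/β) = Set.Ico 0 1 := by
  have hβ0 : (0:ℝ) < β := by linarith
  have hc1 : β * ((1 - α)/β) = 1 - α := by field_simp
  have hc2 : β * ((2 - α)/β) = 2 - α := by field_simp
  have hlt : (1 - α)/β < (2 - α)/β := by
    rw [div_lt_div_iff_of_pos_right hβ0]; linarith
  have hfloor : ∀ x ∈ Set.Ico ((1 - α)/β) ((2 - α)/β), ⌊β * x + α⌋ = 1 := by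
    intro x hx
    have h1 : 1 - α ≤ β * x := by
      rw [← hc1]; exact mul_le_mul_of_nonneg_left hx.1 (le_of_lt hβ0)
    have h2 : β * x < 2 - α := by
      rw [← hc2]; exact mul_lt_mul_of_pos_left hx.2 hβ0
    rw [show (1 : ℤ) = ((1:ℕ) : ℤ) by norm_num, Int.floor_eq_iff]
    constructor
    · push_cast; linarith
    · push_cast; linarith
  refine ⟨hlt, ?_, fun x hx => ⟨hfloor x hx, ?_⟩, ?_⟩
  · intro x hx
    constructor
    · have : 0 < (1 - α)/β := div_pos (by linarith) hβ0
      linarith [hx.1]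
    · have h2 : (2 - α)/β < 1 := by
        rw [div_lt_one hβ0]; linarith
      linarith [hx.2]
  · rw [Om_eq_digit]
    simp only [Function.iterate_zero, id_eq]
    rw [hfloor x hx]
    rfl
  · have hg : ∀ x ∈ Set.Ico ((1 - α)/β) ((2 - α)/β),
        F α β x = 0 + β * (x - (1 - α)/β) := by
      intro x hx
      rw [F_apply, hfloor x hx]
      push_cast
      have : β * (x - (1 - α)/β) = β * x - (1 - α) := by
        rw [mul_sub, hc1]
      linarith
    have himg := image_affine hβ0 (F α β) hg hlt
    rw [himg]
    congr 1
    rw [mul_sub, hc1, hc2]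
    ring

/-- Digit constancy yields affinity of the iterates. -/
lemma affine_of_const (hα0 : 0 ≤ α) (hβ0 : 0 < β) :
    ∀ (t : ℕ) (u v : ℝ), u < v → Set.Ico u v ⊆ Set.Ico 0 1 →
    (∀ s < t, ∃ ds : ℕ, ∀ x ∈ Set.Ico u v, Om α β x s = ds) →
    ∀ x ∈ Set.Ico u v, (F α β)^[t] x = (F α β)^[t] u + β ^ t * (x - u) := by
  intro t
  induction t with
  | zero => intro u v _ _ _ x _; simp
  | succ t ih =>
    intro u v huv h01 hdig x hx
    obtain ⟨d, hd⟩ := hdig 0 (by omega)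
    have humem : u ∈ Set.Ico u v := ⟨le_refl _, huv⟩
    have hflr : ∀ y ∈ Set.Ico u v, ⌊β * y + α⌋ = (d : ℤ) := by
      intro y hy
      have h1 := hd y hy
      rw [Om_eq_digit] at h1
      simp only [Function.iterate_zero, id_eq] at h1
      have h2 : 0 ≤ ⌊β * y + α⌋ := dig_nonneg hα0 hβ0 (h01 hy).1
      omega
    have hgF : ∀ y ∈ Set.Ico u v, F α β y = F α β u + β * (y - u) := by
      intro y hy
      rw [F_apply, F_apply, hflr y hy, hflr u humem]
      ring
    have himg := image_affine hβ0 (F α β) hgF huv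
    have hsub2 : Set.Ico (F α β u) (F α β u + β * (v - u)) ⊆ Set.Ico 0 1 := by
      rw [← himg]
      rintro z ⟨y, hy, rfl⟩
      exact F_mem_Ico y
    have hlt2 : F α β u < F α β u + β * (v - u) := by nlinarith
    have hdig2 : ∀ s < t, ∃ ds : ℕ, ∀ z ∈ Set.Ico (F α β u) (F α β u + β * (v - u)),
        Om α β z s = ds := by
      intro s hs
      obtain ⟨ds, hds⟩ := hdig (s + 1) (by omega)
      refine ⟨ds, fun z hz => ?_⟩
      rw [← himg] at hz
      obtain ⟨y, hy, rfl⟩ := hz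
      have h3 : Om α β (F α β y) s = Om α β y (1 + s) := by
        have := Om_shift (α := α) (β := β) y 1 s
        simpa using this
      rw [h3, Nat.add_comm]
      exact hds y hy
    have hFx : F α β x ∈ Set.Ico (F α β u) (F α β u + β * (v - u)) := by
      rw [← himg]; exact ⟨x, hx, rfl⟩
    have h4 := ih (F α β u) (F α β u + β * (v - u)) hlt2 hsub2 hdig2 (F α β x) hFx
    rw [Function.iterate_succ_apply, Function.iterate_succ_apply, h4, hgF x hx]
    ring

lemma fullReach_succ (hα0 : 0 ≤ α) (hα1 : α < 1) (hβ : 2 < β) {I : Set ℝ} {t : ℕ}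
    (h : FullReach α β I t) : FullReach α β I (t + 1) := by
  have hβ0 : (0:ℝ) < β := by linarith
  obtain ⟨u, v, huv, hI, h01, himg, hdig⟩ := h
  have hβt : (0:ℝ) < β ^ t := by positivity
  have haffn := affine_of_const hα0 hβ0 t u v huv h01 hdig
  have himg2 : (F α β)^[t] '' Set.Ico u v =
      Set.Ico ((F α β)^[t] u) ((F α β)^[t] u + β ^ t * (v - u)) :=
    image_affine (by positivity) _ haffn huv
  rw [himg2] at himg
  obtain ⟨hu0, hv1⟩ := Ico_eq_endpoints himg (by nlinarith)
  obtain ⟨hlt, hsubJ, hdigJ, himgJ⟩ := full_branch hα0 hα1 hβ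
  set u' : ℝ := u + ((1 - α)/β) / β ^ t with hu'
  set v' : ℝ := u + ((2 - α)/β) / β ^ t with hv'
  have hcan : ∀ z : ℝ, β ^ t * (z / β ^ t) = z := fun z => by
    rw [mul_comm, div_mul_cancel₀ _ (ne_of_gt hβt)]
  have hu'v' : u' < v' := by
    rw [hu', hv']
    have h6 : ((1 - α)/β) / β ^ t < ((2 - α)/β) / β ^ t :=
      div_lt_div_of_pos_right hlt hβt
    linarith
  have hvu : β ^ t * (v - u) = 1 := by linarith
  have hsub' : Set.Ico u' v' ⊆ Set.Ico u v := by
    apply Set.Ico_subset_Ico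
    · have : 0 ≤ ((1 - α)/β) / β ^ t :=
        div_nonneg (div_nonneg (by linarith) (le_of_lt hβ0)) (le_of_lt hβt)
      rw [hu']; linarith
    · rw [hv']
      have : ((2 - α)/β) / β ^ t ≤ v - u := by
        rw [div_le_iff₀ hβt]
        have h7 : (2 - α)/β ≤ 1 := by rw [div_le_one hβ0]; linarith
        nlinarith
      linarith
  have hu'mem : u' ∈ Set.Ico u v := hsub' ⟨le_refl _, hu'v'⟩
  have hg' : ∀ x ∈ Set.Ico u' v', (F α β)^[t] x = (F α β)^[t] u' + β ^ t * (x - u') := by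
    intro x hx
    rw [haffn x (hsub' hx), haffn u' hu'mem]
    ring
  have h9 : u' - u = ((1 - α)/β) / β ^ t := by rw [hu']; ring
  have e1 : (F α β)^[t] u' = (1 - α)/β := by
    rw [haffn u' hu'mem, hu0, h9, hcan]; ring
  have h10 : v' - u' = ((2 - α)/β) / β ^ t - ((1 - α)/β) / β ^ t := by
    rw [hu', hv']; ring
  have himg' : (F α β)^[t] '' Set.Ico u' v' =
      Set.Ico ((1 - α)/β) ((2 - α)/β) := by
    rw [image_affine (by positivity) _ hg' hu'v', e1]
    congr 1
    rw [h10, mul_sub, hcan, hcan]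
    ring
  refine ⟨u', v', hu'v', subset_trans hsub' hI, subset_trans hsub' h01, ?_, ?_⟩
  · rw [Function.iterate_succ', Set.image_comp, himg', himgJ]
  · intro s hs
    rcases lt_or_ge s t with h | h
    · obtain ⟨ds, hds⟩ := hdig s h
      exact ⟨ds, fun x hx => hds x (hsub' hx)⟩
    · have hst : s = t := by omega
      subst hst
      refine ⟨1, fun x hx => ?_⟩
      have hFx : (F α β)^[s] x ∈ Set.Ico ((1 - α)/β) ((2 - α)/β) := by
        rw [← himg']; exact ⟨x, hx, rfl⟩
      have h8 := (hdigJ _ hFx).2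
      rw [← h8, Om_eq_digit, Om_eq_digit]
      simp only [Function.iterate_zero, id_eq]

lemma fullReach_mono (hα0 : 0 ≤ α) (hα1 : α < 1) (hβ : 2 < β) {I : Set ℝ} {t t' : ℕ}
    (htt' : t ≤ t') (h : FullReach α β I t) : FullReach α β I t' := by
  obtain ⟨k, rfl⟩ := Nat.exists_eq_add_of_le htt'
  clear htt'
  induction k with
  | zero => exact h
  | succ k ih => exact fullReach_succ hα0 hα1 hβ ih

lemma fullReach_base (hα0 : 0 ≤ α) (hα1 : α < 1) (hβ : 2 < β) :
    FullReach α β (Set.Ico (0:ℝ) 1) 1 := by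
  obtain ⟨hlt, hsubJ, hdigJ, himgJ⟩ := full_branch hα0 hα1 hβ
  refine ⟨_, _, hlt, hsubJ, hsubJ, ?_, ?_⟩
  · rw [Function.iterate_one]; exact himgJ
  · intro s hs
    have : s = 0 := by omega
    subst this
    exact ⟨1, fun x hx => (hdigJ x hx).2⟩

/-- One growth step. -/
lemma growth_step (hα0 : 0 ≤ α) (hα1 : α < 1) (hβ : 2 < β) {U V : ℝ} (hUV : U < V)
    (h01 : Set.Ico U V ⊆ Set.Ico (0:ℝ) 1) :
    ∃ U' V' : ℝ, ∃ d : ℕ, U' < V' ∧ Set.Ico U' V' ⊆ Set.Ico U V ∧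
      (∀ x ∈ Set.Ico U' V', ⌊β * x + α⌋ = (d:ℤ) ∧ Om α β x 0 = d) ∧
      ((F α β) '' Set.Ico U' V' = Set.Ico 0 1 ∨
        ((F α β) '' Set.Ico U' V' =
            Set.Ico (F α β U') (F α β U' + β * (V' - U')) ∧
          β * (V - U) / 2 ≤ β * (V' - U'))) := by
  have hβ0 : (0:ℝ) < β := by linarith
  have hU0 : 0 ≤ U := (h01 ⟨le_refl _, hUV⟩).1
  set dz : ℤ := ⌊β * U + α⌋ with hdz
  have hdz0 : 0 ≤ dz := dig_nonneg hα0 hβ0 hU0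
  set d : ℕ := dz.toNat with hd
  have hdcast : ((d : ℤ)) = dz := Int.toNat_of_nonneg hdz0
  have hdcast' : ((d : ℝ)) = (dz : ℝ) := by exact_mod_cast hdcast
  set cut1 : ℝ := ((d:ℝ) + 1 - α) / β with hcut1
  have hcut1β : β * cut1 = (d:ℝ) + 1 - α := by rw [hcut1]; field_simp
  have hUcut : U < cut1 := by
    have h1 : β * U + α < (dz : ℝ) + 1 := Int.lt_floor_add_one _
    nlinarith
  have hOmd : ∀ (e : ℕ) (x : ℝ), ⌊β * x + α⌋ = (e : ℤ) → Om α β x 0 = e := by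
    intro e x hx
    rw [Om_eq_digit]
    simp only [Function.iterate_zero, id_eq]
    rw [hx]
    exact Int.toNat_natCast e
  have hflconst : ∀ x : ℝ, U ≤ x → x < cut1 → ⌊β * x + α⌋ = (d : ℤ) := by
    intro x h1 h2
    have h3 : (dz : ℝ) ≤ β * U + α := Int.floor_le _
    have h4 : β * x < β * cut1 := mul_lt_mul_of_pos_left h2 hβ0
    have h5 : β * U ≤ β * x := mul_le_mul_of_nonneg_left h1 (le_of_lt hβ0)
    rw [Int.floor_eq_iff]
    constructor
    · push_cast; linarith
    · push_cast; linarith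
  by_cases hcase : V ≤ cut1
  · -- the whole interval is in one branch
    have hfl : ∀ x ∈ Set.Ico U V, ⌊β * x + α⌋ = (d:ℤ) :=
      fun x hx => hflconst x hx.1 (lt_of_lt_of_le hx.2 hcase)
    have hg : ∀ x ∈ Set.Ico U V, F α β x = F α β U + β * (x - U) := by
      intro x hx
      rw [F_apply, F_apply, hfl x hx, hfl U ⟨le_refl _, hUV⟩]
      ring
    refine ⟨U, V, d, hUV, Set.Subset.refl _,
      fun x hx => ⟨hfl x hx, hOmd d x (hfl x hx)⟩, Or.inr ⟨image_affine hβ0 _ hg hUV, ?_⟩⟩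
    linarith [mul_pos hβ0 (by linarith : (0:ℝ) < V - U)]
  · push_neg at hcase
    set cut2 : ℝ := ((d:ℝ) + 2 - α) / β with hcut2
    have hcut2β : β * cut2 = (d:ℝ) + 2 - α := by rw [hcut2]; field_simp
    have hcc : cut1 < cut2 := by
      rw [hcut1, hcut2]
      apply div_lt_div_of_pos_right (by linarith) hβ0
    have hflconst2 : ∀ x : ℝ, cut1 ≤ x → x < cut2 → ⌊β * x + α⌋ = ((d + 1 : ℕ) : ℤ) := by
      intro x h1 h2
      have h4 : β * x < β * cut2 := mul_lt_mul_of_pos_left h2 hβ0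
      have h5 : β * cut1 ≤ β * x := mul_le_mul_of_nonneg_left h1 (le_of_lt hβ0)
      rw [Int.floor_eq_iff]
      constructor
      · push_cast; linarith
      · push_cast; linarith
    by_cases hc2 : cut2 ≤ V
    · -- full middle branch
      have hfl : ∀ x ∈ Set.Ico cut1 cut2, ⌊β * x + α⌋ = ((d + 1 : ℕ) : ℤ) :=
        fun x hx => hflconst2 x hx.1 hx.2
      have hg : ∀ x ∈ Set.Ico cut1 cut2, F α β x = 0 + β * (x - cut1) := by
        intro x hx
        rw [F_apply, hfl x hx]
        push_cast
        nlinarith [hcut1β]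
      have himg := image_affine hβ0 _ hg hcc
      have hI1 : (0:ℝ) + β * (cut2 - cut1) = 1 := by nlinarith [hcut1β, hcut2β]
      refine ⟨cut1, cut2, d + 1, hcc, ?_, fun x hx => ⟨hfl x hx, hOmd (d+1) x (hfl x hx)⟩,
        Or.inl ?_⟩
      · exact Set.Ico_subset_Ico (le_of_lt hUcut) hc2
      · rw [himg, hI1]
    · push_neg at hc2
      by_cases hhalf : (V - U)/2 ≤ V - cut1
      · -- right piece [cut1, V)
        have hcV : cut1 < V := hcase
        have hfl : ∀ x ∈ Set.Ico cut1 V, ⌊β * x + α⌋ = ((d + 1 : ℕ) : ℤ) :=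
          fun x hx => hflconst2 x hx.1 (lt_trans hx.2 hc2)
        have hg : ∀ x ∈ Set.Ico cut1 V, F α β x = F α β cut1 + β * (x - cut1) := by
          intro x hx
          rw [F_apply, F_apply, hfl x hx, hfl cut1 ⟨le_refl _, hcV⟩]
          ring
        refine ⟨cut1, V, d + 1, hcV, Set.Ico_subset_Ico (le_of_lt hUcut) (le_refl _),
          fun x hx => ⟨hfl x hx, hOmd (d+1) x (hfl x hx)⟩,
          Or.inr ⟨image_affine hβ0 _ hg hcV, ?_⟩⟩
        have := mul_le_mul_of_nonneg_left hhalf (le_of_lt hβ0)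
        linarith
      · -- left piece [U, cut1)
        push_neg at hhalf
        have hfl : ∀ x ∈ Set.Ico U cut1, ⌊β * x + α⌋ = (d:ℤ) :=
          fun x hx => hflconst x hx.1 hx.2
        have hg : ∀ x ∈ Set.Ico U cut1, F α β x = F α β U + β * (x - U) := by
          intro x hx
          rw [F_apply, F_apply, hfl x hx, hfl U ⟨le_refl _, hUcut⟩]
          ring
        refine ⟨U, cut1, d, hUcut, Set.Ico_subset_Ico (le_refl _) (le_of_lt hcase),
          fun x hx => ⟨hfl x hx, hOmd d x (hfl x hx)⟩,
          Or.inr ⟨image_affine hβ0 _ hg hUcut, ?_⟩⟩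
        have h6 : (V - U)/2 ≤ cut1 - U := by linarith
        have := mul_le_mul_of_nonneg_left h6 (le_of_lt hβ0)
        linarith

/-- Iterated growth: an interval of definite size reaches everything. -/
lemma growth_iter (hα0 : 0 ≤ α) (hα1 : α < 1) (hβ : 2 < β) :
    ∀ (k : ℕ) (U V : ℝ), U < V → Set.Ico U V ⊆ Set.Ico (0:ℝ) 1 →
      1 ≤ (β/2) ^ k * (V - U) → FullReach α β (Set.Ico U V) (k + 2) := by
  have hβ0 : (0:ℝ) < β := by linarith
  intro k
  induction k with
  | zero =>
    intro U V hUV h01 hk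
    have h1 : (1:ℝ) ≤ V - U := by
      have : ((β/2):ℝ) ^ 0 = 1 := by norm_num
      rw [this, one_mul] at hk
      exact hk
    obtain ⟨hU0, hV1⟩ := (Set.Ico_subset_Ico_iff hUV).mp h01
    have hU : U = 0 := by linarith
    have hV : V = 1 := by linarith
    rw [hU, hV]
    exact fullReach_succ hα0 hα1 hβ (fullReach_base hα0 hα1 hβ)
  | succ k ih =>
    intro U V hUV h01 hk
    obtain ⟨U', V', d, hU'V', hsub, hdig, hor⟩ := growth_step hα0 hα1 hβ hUV h01
    rcases hor with hfull | ⟨himg, hlen⟩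
    · have h1 : FullReach α β (Set.Ico U V) 1 :=
        ⟨U', V', hU'V', hsub, subset_trans hsub h01,
          by rw [Function.iterate_one]; exact hfull,
          fun s hs => by
            have : s = 0 := by omega
            subst this
            exact ⟨d, fun x hx => (hdig x hx).2⟩⟩
      exact fullReach_mono hα0 hα1 hβ (by omega) h1
    · set A : ℝ := F α β U' with hA
      set B : ℝ := F α β U' + β * (V' - U') with hB
      have hAB : A < B := by
        rw [hA, hB]
        nlinarith
      have hAB01 : Set.Ico A B ⊆ Set.Ico (0:ℝ) 1 := by
        rw [← himg]
        rintro z ⟨y, hy, rfl⟩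
        exact F_mem_Ico y
      have hklen : 1 ≤ (β/2) ^ k * (B - A) := by
        have h2 : B - A = β * (V' - U') := by rw [hA, hB]; ring
        have h3 : (β/2) * (V - U) ≤ B - A := by rw [h2]; linarith
        have h4 : (0:ℝ) < (β/2) ^ k := by positivity
        calc (1:ℝ) ≤ (β/2) ^ (k+1) * (V - U) := hk
          _ = (β/2) ^ k * ((β/2) * (V - U)) := by rw [pow_succ]; ring
          _ ≤ (β/2) ^ k * (B - A) := by
              apply mul_le_mul_of_nonneg_left h3 (le_of_lt h4)
      obtain ⟨u₂, v₂, huv₂, hsubAB, h01₂, himg₂, hdig₂⟩ := ih A B hAB hAB01 hklen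
      obtain ⟨hAu₂, hv₂B⟩ := (Set.Ico_subset_Ico_iff huv₂).mp hsubAB
      set u₃ : ℝ := U' + (u₂ - A)/β with hu₃
      set v₃ : ℝ := U' + (v₂ - A)/β with hv₃
      have hcan : ∀ z : ℝ, β * (z / β) = z := fun z => by
        rw [mul_comm, div_mul_cancel₀ _ (ne_of_gt hβ0)]
      have hu₃v₃ : u₃ < v₃ := by
        rw [hu₃, hv₃]
        have : (u₂ - A)/β < (v₂ - A)/β := div_lt_div_of_pos_right (by linarith) hβ0
        linarith
      have hsub₃ : Set.Ico u₃ v₃ ⊆ Set.Ico U' V' := by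
        apply Set.Ico_subset_Ico
        · rw [hu₃]
          have : 0 ≤ (u₂ - A)/β := div_nonneg (by linarith) (le_of_lt hβ0)
          linarith
        · rw [hv₃]
          have : (v₂ - A)/β ≤ V' - U' := by
            rw [div_le_iff₀ hβ0]
            have : v₂ ≤ A + β * (V' - U') := by rw [← hB]; exact hv₂B
            linarith
          linarith
      have hgF : ∀ x ∈ Set.Ico U' V', F α β x = A + β * (x - U') := by
        intro x hx
        rw [F_apply, (hdig x hx).1, hA, F_apply, (hdig U' ⟨le_refl _, hU'V'⟩).1]
        ring
      have h9 : u₃ - U' = (u₂ - A)/β := by rw [hu₃]; ring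
      have hFu₃ : F α β u₃ = u₂ := by
        rw [hgF u₃ (hsub₃ ⟨le_refl _, hu₃v₃⟩), h9, hcan]; ring
      have hg₃ : ∀ x ∈ Set.Ico u₃ v₃, F α β x = F α β u₃ + β * (x - u₃) := by
        intro x hx
        rw [hgF x (hsub₃ hx), hgF u₃ (hsub₃ ⟨le_refl _, hu₃v₃⟩)]
        ring
      have himg₃ : F α β '' Set.Ico u₃ v₃ = Set.Ico u₂ v₂ := by
        rw [image_affine hβ0 _ hg₃ hu₃v₃, hFu₃]
        congr 1
        have h11 : v₃ - u₃ = (v₂ - A)/β - (u₂ - A)/β := by rw [hu₃, hv₃]; ring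
        rw [h11, mul_sub, hcan, hcan]
        ring
      refine ⟨u₃, v₃, hu₃v₃, subset_trans hsub₃ (subset_trans hsub (Set.Subset.refl _)),
        subset_trans hsub₃ (subset_trans hsub h01), ?_, ?_⟩
      · have hcomp : (F α β)^[k + 1 + 2] = (F α β)^[k + 2] ∘ (F α β) := by
          rw [← Function.iterate_succ]
        rw [hcomp, Set.image_comp, himg₃, himg₂]
      · intro s hs
        cases s with
        | zero => exact ⟨d, fun x hx => (hdig x (hsub₃ hx)).2⟩
        | succ s' =>
          obtain ⟨ds, hds⟩ := hdig₂ s' (by omega)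
          refine ⟨ds, fun x hx => ?_⟩
          have hFx : F α β x ∈ Set.Ico u₂ v₂ := by
            rw [← himg₃]; exact ⟨x, hx, rfl⟩
          have h12 : Om α β x (1 + s') = Om α β (F α β x) s' := by
            have := Om_shift (α := α) (β := β) x 1 s'
            simpa using this.symm
          rw [Nat.add_comm 1 s'] at h12
          rw [h12]
          exact hds _ hFx

/-- Uniform time to cover `[0,1)` from any interval of length `≥ δ`. -/
lemma exists_tau (hα0 : 0 ≤ α) (hα1 : α < 1) (hβ : 2 < β) {δ : ℝ} (hδ : 0 < δ) :
    ∃ τ : ℕ, 1 ≤ τ ∧ ∀ U V : ℝ, U < V → δ ≤ V - U → Set.Ico U V ⊆ Set.Ico (0:ℝ) 1 →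
      FullReach α β (Set.Ico U V) τ := by
  have hhalf : (1:ℝ) < β/2 := by linarith
  obtain ⟨k, hk⟩ := pow_unbounded_of_one_lt (1/δ) hhalf
  refine ⟨k + 2, by omega, fun U V hUV hδUV h01 => ?_⟩
  apply growth_iter hα0 hα1 hβ k U V hUV h01
  have h2 : (0:ℝ) < (β/2) ^ k := by positivity
  have h3 : 1/δ * δ ≤ (β/2) ^ k * (V - U) :=
    mul_le_mul (le_of_lt hk) hδUV (le_of_lt hδ) (le_of_lt h2)
  rw [one_div, inv_mul_cancel₀ (ne_of_gt hδ)] at h3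
  exact h3


/-! ### Stage F: language and gluing -/

lemma inLang_iff_cyl (w : List ℕ) : inLang α β w ↔ (Cyl α β w).Nonempty := by
  constructor
  · rintro ⟨y, hy, hdig⟩
    obtain ⟨x, hx, hxy⟩ := sig_approx hy w.length
    refine ⟨x, hx, fun i hi => ?_⟩
    rw [hxy i hi, hdig ⟨i, hi⟩, List.getD_eq_getElem _ _ hi, List.get_eq_getElem]
  · rintro ⟨x, hx01, hdig⟩
    refine ⟨Om α β x, subset_closure ⟨x, hx01, rfl⟩, fun i => ?_⟩
    rw [hdig i i.2, List.getD_eq_getElem _ _ i.2, List.get_eq_getElem]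

lemma Cyl_append (w₁ w₂ : List ℕ) :
    Cyl α β (w₁ ++ w₂) = Cyl α β w₁ ∩ (F α β)^[w₁.length] ⁻¹' (Cyl α β w₂) := by
  ext x
  simp only [Set.mem_inter_iff, Set.mem_preimage]
  constructor
  · rintro ⟨hx, hdig⟩
    refine ⟨⟨hx, fun i hi => ?_⟩, ⟨iterate_mem_Ico hx _, fun i hi => ?_⟩⟩
    · rw [← List.getD_append w₁ w₂ 0 i hi]
      exact hdig i (by rw [List.length_append]; omega)
    · rw [Om_shift]
      have h1 := hdig (w₁.length + i) (by rw [List.length_append]; omega)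
      rw [List.getD_append_right w₁ w₂ 0 _ (by omega)] at h1
      simpa using h1
  · rintro ⟨⟨hx, hd1⟩, hmem, hd2⟩
    refine ⟨hx, fun i hi => ?_⟩
    rcases lt_or_ge i w₁.length with h | h
    · rw [List.getD_append _ _ _ _ h]
      exact hd1 i h
    · rw [List.getD_append_right _ _ _ _ h]
      have h2 := hd2 (i - w₁.length) (by rw [List.length_append] at hi; omega)
      rw [Om_shift] at h2
      rw [← h2]
      congr 1
      omega

lemma glue_zero (w : Fin 1 → List ℕ) (v : Fin 0 → List ℕ) : glue w v = w (Fin.last 0) := by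
  simp [glue]

lemma glue_succ {n : ℕ} (w : Fin (n + 2) → List ℕ) (v'' : Fin n → List ℕ) (vnew : List ℕ) :
    glue w (Fin.snoc v'' vnew) =
      glue (fun i : Fin (n + 1) => w i.castSucc) v'' ++ (vnew ++ w (Fin.last (n + 1))) := by
  simp only [glue, List.ofFn_succ', List.concat_eq_append, List.flatten_append,
    Fin.snoc_castSucc, Fin.snoc_last]
  simp [List.append_assoc]


end Dev

/-- **Proposition.** For `0 ≤ α < 1` and `β > 2` with `𝖣(a)` bounded, the set
`𝒢(M) = {w ∈ 𝓛 : k₂(w) ≤ M}` has specification for every `M ∈ ℕ`. -/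
theorem GM_hasSpec (α β : ℝ) (hα0 : 0 ≤ α) (hα1 : α < 1) (hβ : 2 < β)
    (b : ℕ → ℕ) (hb : b ∈ Sig α β) (hbsup : ∀ y ∈ Sig α β, lexLe y b)
    (hD : BddAbove (D (Om α β 0) b)) (M : ℕ) :
    HasSpec (inLang α β) (fun w => inLang α β w ∧ kmax b w ≤ M) := by
  have hβ0 : (0:ℝ) < β := by linarith
  have hβ1 : (1:ℝ) < β := by linarith
  have hbeq : b = bb α β := b_eq_bb hα0 hβ0 hb hbsup
  subst hbeq
  obtain ⟨N, hN⟩ := hD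
  have hN' : ∀ k ∈ D (Om α β 0) (bb α β), k ≤ N := fun k hk => hN hk
  obtain ⟨δ, hδpos, hfollow⟩ := follower_large hα0 hα1 hβ1 hN' M
  obtain ⟨τ, hτ1, hfull⟩ := exists_tau hα0 hα1 hβ hδpos
  have main : ∀ n (w : Fin (n + 1) → List ℕ),
      (∀ i, (Cyl α β (w i)).Nonempty ∧ kmax (bb α β) (w i) ≤ M) →
      ∃ v : Fin n → List ℕ, (∀ i, (v i).length = τ ∧ (Cyl α β (v i)).Nonempty) ∧
        (Cyl α β (glue w v)).Nonempty ∧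
        (F α β)^[(glue w v).length] '' Cyl α β (glue w v) =
          (F α β)^[(w (Fin.last n)).length] '' Cyl α β (w (Fin.last n)) := by
    intro n
    induction n with
    | zero =>
      intro w hw
      refine ⟨fun i => i.elim0, fun i => i.elim0, ?_, ?_⟩
      · rw [glue_zero]; exact (hw _).1
      · rw [glue_zero]
    | succ n ihn =>
      intro w hw
      set w' : Fin (n + 1) → List ℕ := fun i => w i.castSucc with hw'def
      obtain ⟨v'', hv''cond, hune, huinv⟩ := ihn w' (fun i => hw i.castSucc)
      set u : List ℕ := glue w' v'' with hu
      set wpen : List ℕ := w' (Fin.last n) with hwpen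
      obtain ⟨c, e, hδce, hce01, himgpen⟩ := hfollow wpen (hw _).1 (hw _).2
      have huimg : (F α β)^[u.length] '' Cyl α β u = Set.Ico c e := by
        rw [huinv, himgpen]
      have hce : c < e := by linarith
      obtain ⟨u₂, v₂, hu₂v₂, hsubce, h01₂, himgfull, hdigfull⟩ :=
        hfull c e hce hδce hce01
      choose f hf using fun s (hs : s < τ) => hdigfull s hs
      set g : ℕ → ℕ := fun s => if h : s < τ then f s h else 0 with hgdef
      set vnew : List ℕ := List.ofFn (fun j : Fin τ => g j) with hvnew
      have hvnewlen : vnew.length = τ := by rw [hvnew]; simp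
      set wlast : List ℕ := w (Fin.last (n + 1)) with hwlast
      obtain ⟨c₂, e₂, hδ₂, hce01₂, himglast⟩ := hfollow wlast (hw _).1 (hw _).2
      have hI'cyl : Set.Ico u₂ v₂ ⊆ Cyl α β vnew := by
        intro x hx
        refine ⟨h01₂ hx, fun i hi => ?_⟩
        rw [hvnewlen] at hi
        rw [hvnew, getD_ofFn g τ i hi, hgdef]
        simp only [hi, dif_pos]
        exact hf i hi x hx
      have hglue : glue w (Fin.snoc v'' vnew) = u ++ (vnew ++ wlast) := by
        rw [hu, hwlast]
        exact glue_succ w v'' vnew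
      have hGlen : (u ++ (vnew ++ wlast)).length = u.length + (τ + wlast.length) := by
        simp [List.length_append, hvnewlen]
      have himgG : (F α β)^[(u ++ (vnew ++ wlast)).length] '' Cyl α β (u ++ (vnew ++ wlast)) =
          (F α β)^[wlast.length] '' Cyl α β wlast := by
        rw [hGlen]
        have hit : (F α β)^[u.length + (τ + wlast.length)] =
            (F α β)^[wlast.length] ∘ ((F α β)^[τ] ∘ (F α β)^[u.length]) := by
          have e : u.length + (τ + wlast.length) = wlast.length + (τ + u.length) := by omega
          rw [e, Function.iterate_add, Function.iterate_add]
        rw [hit, Set.image_comp, Set.image_comp]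
        have h1 : (F α β)^[u.length] '' Cyl α β (u ++ (vnew ++ wlast)) =
            Set.Ico c e ∩ Cyl α β (vnew ++ wlast) := by
          rw [Cyl_append, Set.image_inter_preimage, huimg]
        rw [h1]
        have h2 : Set.Ico c e ∩ Cyl α β (vnew ++ wlast) =
            (Set.Ico c e ∩ Cyl α β vnew) ∩ (F α β)^[τ] ⁻¹' (Cyl α β wlast) := by
          rw [Cyl_append, hvnewlen, Set.inter_assoc]
        rw [h2, Set.image_inter_preimage]
        have h3 : (F α β)^[τ] '' (Set.Ico c e ∩ Cyl α β vnew) = Set.Ico 0 1 := by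
          apply Set.Subset.antisymm
          · rintro z ⟨y, hy, rfl⟩
            exact iterate_mem_Ico (hce01 hy.1) τ
          · rw [← himgfull]
            apply Set.image_mono
            intro x hx
            exact ⟨hsubce hx, hI'cyl hx⟩
        have h4 : Set.Ico (0:ℝ) 1 ∩ Cyl α β wlast = Cyl α β wlast :=
          Set.inter_eq_self_of_subset_right (fun x hx => hx.1)
        rw [h3, h4]
      have hGne : (Cyl α β (u ++ (vnew ++ wlast))).Nonempty := by
        by_contra hcon
        rw [Set.not_nonempty_iff_eq_empty] at hcon
        rw [hcon, Set.image_empty] at himgG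
        rw [himglast] at himgG
        exact (Set.nonempty_Ico.mpr (by linarith : c₂ < e₂)).ne_empty himgG.symm
      refine ⟨Fin.snoc v'' vnew, ?_, ?_, ?_⟩
      · intro i
        refine Fin.lastCases ?_ ?_ i
        · rw [Fin.snoc_last]
          exact ⟨hvnewlen, ⟨u₂, hI'cyl ⟨le_refl _, hu₂v₂⟩⟩⟩
        · intro j
          rw [Fin.snoc_castSucc]
          exact hv''cond j
      · rw [hglue]; exact hGne
      · rw [hglue, himgG, hwlast]
  refine ⟨τ, hτ1, fun n w hw => ?_⟩
  have hw2 : ∀ i, (Cyl α β (w i)).Nonempty ∧ kmax (bb α β) (w i) ≤ M := fun i =>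
    ⟨(inLang_iff_cyl _).mp (hw i).1, (hw i).2⟩
  obtain ⟨v, hvcond, hgne, -⟩ := main n w hw2
  exact ⟨v, fun i => ⟨(hvcond i).1, (inLang_iff_cyl _).mpr (hvcond i).2⟩,
    (inLang_iff_cyl _).mpr hgne⟩


end IntermediateBeta
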